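/- Let A be an N×N integer matrix and A_- its Cuntz splice. The induced homomorphism from G(A) = Z^N/(1-A^t)Z^N to G(A_-) = Z^{N+2}/(1-A_-^t)Z^{N+2} given by x ↦ (x,0,0) is surjective: every class in G(A_-) is represented by a vector of the form (x_1,...,x_N,0,0). -/

import Mathlib

/-- Cuntz splice of an `M × M` matrix `B` (`M = m+1`): the `(M+2) × (M+2)` matrix whose
upper-left `M × M` block is `B`, with (1-based) entries
`B₋(M,M+1) = B₋(M+1,M) = B₋(M+1,M+1) = B₋(M+1,M+2) = B₋(M+2,M+1) = B₋(M+2,M+2) = 1`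
and all other new entries `0`. -/
def cuntzSplice {m : ℕ} (B : Matrix (Fin (m+1)) (Fin (m+1)) ℤ) :
    Matrix (Fin (m+3)) (Fin (m+3)) ℤ :=
  Matrix.of fun i j =>
    if hi : (i : ℕ) < m + 1 then
      if hj : (j : ℕ) < m + 1 then B ⟨i, hi⟩ ⟨j, hj⟩
      else if (i : ℕ) = m ∧ (j : ℕ) = m + 1 then 1 else 0
    else
      if (i : ℕ) = m + 1 then
        if (j : ℕ) = m ∨ (j : ℕ) = m + 1 ∨ (j : ℕ) = m + 2 then 1 else 0
      else
        if (j : ℕ) = m + 1 ∨ (j : ℕ) = m + 2 then 1 else 0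

/-- The subgroup `(1 - Bᵗ)ℤ^k` of `ℤ^k`, i.e. the image of `x ↦ (1 - Bᵗ)x`. -/
def bfSubgroup {k : ℕ} (B : Matrix (Fin k) (Fin k) ℤ) : Submodule ℤ (Fin k → ℤ) :=
  LinearMap.range (Matrix.mulVecLin (1 - B.transpose))

/-- The map `ξ : ℤ^N → ℤ^{N+2}`, `(x_1,…,x_N) ↦ (x_1,…,x_N,0,0)` (`N = n+1`). -/
def xiMap {n : ℕ} (x : Fin (n+1) → ℤ) : Fin (n+3) → ℤ :=
  fun j => if hj : (j : ℕ) < n + 1 then x ⟨j, hj⟩ else 0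

/-- Surjectivity of the induced map `G(A) → G(A₋)`: every class in `G(A₋)` is
represented by a vector of the form `(x_1,…,x_N,0,0)`; concretely, for every
`x ∈ ℤ^{N+2}` the vector `x - (x_1,…,x_{N-1}, x_N - x_{N+2}, 0, 0)` lies in
`(1 - A₋ᵗ)ℤ^{N+2}`. -/
theorem xiMap_induced_surjective {n : ℕ} (A : Matrix (Fin (n+1)) (Fin (n+1)) ℤ)
    (x : Fin (n+3) → ℤ) :
    x - xiMap (fun i : Fin (n+1) =>
        if (i : ℕ) = n then x ⟨n, by omega⟩ - x ⟨n+2, by omega⟩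
        else x ⟨i, by omega⟩)
      ∈ bfSubgroup (cuntzSplice A) := by
  refine ⟨Pi.single (⟨n+1, by omega⟩ : Fin (n+3)) (-x ⟨n+2, by omega⟩) +
          Pi.single (⟨n+2, by omega⟩ : Fin (n+3)) (-x ⟨n+1, by omega⟩), ?_⟩
  funext i
  simp only [Matrix.mulVecLin_apply, Matrix.mulVec_add, Matrix.mulVec_single,
    Pi.add_apply, Pi.sub_apply, Matrix.sub_apply, Matrix.one_apply,
    Matrix.transpose_apply, xiMap, cuntzSplice, Matrix.of_apply]
  rcases Nat.lt_or_ge (i : ℕ) n with hi | hi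
  · have h1 : (i:ℕ) < n + 1 := by omega
    simp [Fin.ext_iff, h1, show (i:ℕ) ≠ n+1 by omega, show (i:ℕ) ≠ n+2 by omega,
      show ¬((i:ℕ) = n) by omega]
  · have hub : (i:ℕ) < n+3 := i.isLt
    rcases (show (i:ℕ) = n ∨ (i:ℕ) = n+1 ∨ (i:ℕ) = n+2 by omega) with h|h|h
    · simp_all [Fin.ext_iff, show (i:ℕ) < n+1 by omega]
      rw [show i = (⟨n, by omega⟩ : Fin (n+3)) from Fin.ext (by simp; omega)]
      ring
    · simp_all [Fin.ext_iff, show ¬((i:ℕ) < n+1) by omega]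
      rw [show i = (⟨1+n, by omega⟩ : Fin (n+3)) from Fin.ext (by simp; omega)]
      rw [show (⟨1+n, by omega⟩ : Fin (n+3)) = ⟨n+1, by omega⟩ from Fin.ext (Nat.add_comm 1 n)]
      simp
    · simp_all [Fin.ext_iff, show ¬((i:ℕ) < n+1) by omega, show (i:ℕ) ≠ n+1 by omega]
      rw [show i = (⟨2+n, by omega⟩ : Fin (n+3)) from Fin.ext (by simp; omega)]
      rw [show (⟨2+n, by omega⟩ : Fin (n+3)) = ⟨n+2, by omega⟩ from Fin.ext (Nat.add_comm 2 n)]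
      simp
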